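/- Let G = (V, E) be an undirected graph on n vertices and G_p the random subgraph keeping each edge independently with probability p ∈ (0, 1). Then with high probability the density satisfies ρ(G_p) ∈ [(1 − ε)·p·ρ(G) − O(log n / ε), (1 + ε)·p·ρ(G) + O(log n / ε)]. -/

import Mathlib

open Finset
open scoped NNRat Classical

/-- Degree of `u` inside `S` in the undirected graph with edge set `F`. -/
def edegIn {n : ℕ} (F : Finset (Sym2 (Fin n))) (S : Finset (Fin n)) (u : Fin n) : ℕ :=
  (S.filter fun w => w ≠ u ∧ s(u, w) ∈ F).card

/-- Minimum degree of the induced subgraph on `S`. -/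
def emindegIn {n : ℕ} (F : Finset (Sym2 (Fin n))) (S : Finset (Fin n)) : ℕ :=
  if h : S.Nonempty then S.inf' h (edegIn F S) else 0

/-- Coreness of `v` in the undirected graph with edge set `F`. -/
def coreE {n : ℕ} (F : Finset (Sym2 (Fin n))) (v : Fin n) : ℕ :=
  ((univ : Finset (Fin n)).powerset.filter fun S => v ∈ S).sup (emindegIn F)

/-- Density of the undirected graph with edge set `F`: the maximum over nonempty
`S` of `|F[S]| / |S|`. -/
def densE {n : ℕ} (F : Finset (Sym2 (Fin n))) : ℚ≥0 :=
  ((univ : Finset (Fin n)).powerset.filter fun S => S.Nonempty).sup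
    fun S => ((F ∩ S.sym2).card : ℚ≥0) / (S.card : ℚ≥0)

/-- Arboricity via Nash-Williams: `max` over `S` with `|S| ≥ 2` of `⌈|F[S]|/(|S|−1)⌉`. -/
def arbE {n : ℕ} (F : Finset (Sym2 (Fin n))) : ℕ :=
  ((univ : Finset (Fin n)).powerset.filter fun S => 2 ≤ S.card).sup
    fun S => ⌈((F ∩ S.sym2).card : ℚ) / ((S.card : ℚ) - 1)⌉₊

/-- The probability, when each edge of `E0` is kept independently with probability `p`,
that the resulting random edge subset satisfies `A`. -/
noncomputable def probE {n : ℕ} (E0 : Finset (Sym2 (Fin n))) (p : ℝ)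
    (A : Finset (Sym2 (Fin n)) → Prop) : ℝ :=
  ∑ F ∈ E0.powerset,
    if A F then p ^ F.card * (1 - p) ^ (E0.card - F.card) else 0

section helpers
variable {n : ℕ}

lemma mgfE (E0 T : Finset (Sym2 (Fin n))) (p x : ℝ) :
    ∑ F ∈ E0.powerset, p ^ F.card * (1 - p) ^ (E0.card - F.card) * x ^ (F ∩ T).card
      = (1 - p + p * x) ^ (E0 ∩ T).card := by
  have h := Finset.prod_add (fun e => p * (if e ∈ T then x else 1)) (fun _ => (1 - p)) E0
  have hL : ∏ e ∈ E0, (p * (if e ∈ T then x else 1) + (1 - p))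
      = (1 - p + p * x) ^ (E0 ∩ T).card := by
    have : ∀ e, (p * (if e ∈ T then x else 1) + (1 - p))
        = (if e ∈ T then (1 - p + p * x) else 1) := by
      intro e; by_cases he : e ∈ T <;> simp [he] <;> ring
    rw [Finset.prod_congr rfl (fun e _ => this e), Finset.prod_ite_mem,
      Finset.prod_const]
  have hR : ∀ F ∈ E0.powerset,
      (∏ e ∈ F, p * (if e ∈ T then x else 1)) * ∏ _e ∈ E0 \ F, (1 - p)
        = p ^ F.card * (1 - p) ^ (E0.card - F.card) * x ^ (F ∩ T).card := by
    intro F hF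
    rw [Finset.mem_powerset] at hF
    rw [Finset.prod_mul_distrib, Finset.prod_const, Finset.prod_ite_mem,
      Finset.prod_const, Finset.prod_const, Finset.card_sdiff_of_subset hF]
    ring
  rw [hL, Finset.sum_congr rfl hR] at h
  exact h.symm

lemma weight_nonneg (E0 : Finset (Sym2 (Fin n))) {p : ℝ} (hp0 : 0 ≤ p) (hp1 : p ≤ 1)
    (F : Finset (Sym2 (Fin n))) :
    0 ≤ p ^ F.card * (1 - p) ^ (E0.card - F.card) :=
  mul_nonneg (pow_nonneg hp0 _) (pow_nonneg (by linarith) _)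

lemma total_mass (E0 : Finset (Sym2 (Fin n))) (p : ℝ) :
    ∑ F ∈ E0.powerset, p ^ F.card * (1 - p) ^ (E0.card - F.card) = 1 := by
  have h := mgfE E0 ∅ p 1
  simpa using h

lemma probE_compl (E0 : Finset (Sym2 (Fin n))) (p : ℝ) (A : Finset (Sym2 (Fin n)) → Prop) :
    probE E0 p A = 1 - probE E0 p (fun F => ¬ A F) := by
  have h1 : probE E0 p A + probE E0 p (fun F => ¬ A F)
      = ∑ F ∈ E0.powerset, p ^ F.card * (1 - p) ^ (E0.card - F.card) := by
    rw [probE, probE, ← Finset.sum_add_distrib]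
    refine Finset.sum_congr rfl fun F _ => ?_
    by_cases h : A F <;> simp [h]
  rw [total_mass] at h1
  linarith

lemma probE_le_sum {ι : Type*} (E0 : Finset (Sym2 (Fin n))) {p : ℝ} (hp0 : 0 ≤ p) (hp1 : p ≤ 1)
    (A : Finset (Sym2 (Fin n)) → Prop) (𝒮 : Finset ι) (B : ι → Finset (Sym2 (Fin n)) → Prop)
    (h : ∀ F ∈ E0.powerset, A F → ∃ i ∈ 𝒮, B i F) :
    probE E0 p A ≤ ∑ i ∈ 𝒮, probE E0 p (B i) := by
  calc probE E0 p A
      ≤ ∑ F ∈ E0.powerset, ∑ i ∈ 𝒮,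
          (if B i F then p ^ F.card * (1 - p) ^ (E0.card - F.card) else 0) := by
        refine Finset.sum_le_sum fun F hF => ?_
        by_cases hA : A F
        · rw [if_pos hA]
          obtain ⟨i, hi, hBi⟩ := h F hF hA
          refine Finset.single_le_sum (f := fun i =>
            (if B i F then p ^ F.card * (1 - p) ^ (E0.card - F.card) else 0)) ?_ hi |>.trans_eq' ?_
          · intro j _
            by_cases hB : B j F
            · rw [if_pos hB]; exact weight_nonneg E0 hp0 hp1 F
            · rw [if_neg hB]
          · simp only [if_pos hBi]
        · rw [if_neg hA]
          refine Finset.sum_nonneg fun j _ => ?_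
          by_cases hB : B j F
          · rw [if_pos hB]; exact weight_nonneg E0 hp0 hp1 F
          · rw [if_neg hB]
    _ = ∑ i ∈ 𝒮, probE E0 p (B i) := by
        rw [Finset.sum_comm]
        rfl

lemma tail_upper (E0 T : Finset (Sym2 (Fin n))) {p x : ℝ} (a : ℝ)
    (hp0 : 0 ≤ p) (hp1 : p ≤ 1) (hx : 1 ≤ x) :
    probE E0 p (fun F => a ≤ ((F ∩ T).card : ℝ))
      ≤ (1 - p + p * x) ^ (E0 ∩ T).card / x ^ a := by
  have hx0 : (0:ℝ) < x := lt_of_lt_of_le one_pos hx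
  have hxa : (0:ℝ) < x ^ a := Real.rpow_pos_of_pos hx0 a
  rw [le_div_iff₀ hxa, probE, Finset.sum_mul, ← mgfE E0 T p x]
  refine Finset.sum_le_sum fun F _ => ?_
  by_cases hA : a ≤ ((F ∩ T).card : ℝ)
  · rw [if_pos hA]
    have : x ^ a ≤ x ^ ((F ∩ T).card : ℕ) := by
      rw [← Real.rpow_natCast x]
      exact Real.rpow_le_rpow_of_exponent_le hx hA
    have hw := weight_nonneg E0 hp0 hp1 F
    calc p ^ F.card * (1 - p) ^ (E0.card - F.card) * x ^ a
        ≤ p ^ F.card * (1 - p) ^ (E0.card - F.card) * x ^ ((F ∩ T).card : ℕ) := by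
          exact mul_le_mul_of_nonneg_left this hw
      _ = _ := rfl
  · rw [if_neg hA, zero_mul]
    have hw := weight_nonneg E0 hp0 hp1 F
    positivity

lemma tail_lower (E0 T : Finset (Sym2 (Fin n))) {p x : ℝ} (a : ℝ)
    (hp0 : 0 ≤ p) (hp1 : p ≤ 1) (hx0 : 0 < x) (hx : x ≤ 1) :
    probE E0 p (fun F => ((F ∩ T).card : ℝ) ≤ a)
      ≤ (1 - p + p * x) ^ (E0 ∩ T).card / x ^ a := by
  have hxa : (0:ℝ) < x ^ a := Real.rpow_pos_of_pos hx0 a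
  rw [le_div_iff₀ hxa, probE, Finset.sum_mul, ← mgfE E0 T p x]
  refine Finset.sum_le_sum fun F _ => ?_
  by_cases hA : ((F ∩ T).card : ℝ) ≤ a
  · rw [if_pos hA]
    have : x ^ a ≤ x ^ ((F ∩ T).card : ℕ) := by
      rw [← Real.rpow_natCast x]
      exact Real.rpow_le_rpow_of_exponent_ge hx0 hx hA
    exact mul_le_mul_of_nonneg_left this (weight_nonneg E0 hp0 hp1 F)
  · rw [if_neg hA, zero_mul]
    have hw := weight_nonneg E0 hp0 hp1 F
    positivity


variable {n : ℕ}

lemma densE_ge (F : Finset (Sym2 (Fin n))) (S : Finset (Fin n)) (hS : S.Nonempty) :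
    ((F ∩ S.sym2).card : ℝ) / (S.card : ℝ) ≤ (densE F : ℝ) := by
  have h : ((F ∩ S.sym2).card : ℚ≥0) / (S.card : ℚ≥0) ≤ densE F := by
    unfold densE
    exact Finset.le_sup (α := ℚ≥0)
      (Finset.mem_filter.mpr ⟨Finset.mem_powerset.mpr (Finset.subset_univ S), hS⟩)
  have h2 : (((((F ∩ S.sym2).card : ℚ≥0)) / (S.card : ℚ≥0) : ℚ≥0) : ℝ) ≤ ((densE F : ℚ≥0) : ℝ) :=
    NNRat.cast_le.mpr h
  rwa [NNRat.cast_div, NNRat.cast_natCast, NNRat.cast_natCast] at h2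

lemma densE_le (F : Finset (Sym2 (Fin n))) (D : ℝ) (hD : 0 ≤ D)
    (h : ∀ S : Finset (Fin n), S.Nonempty → ((F ∩ S.sym2).card : ℝ) ≤ D * S.card) :
    (densE F : ℝ) ≤ D := by
  unfold densE
  by_cases hne : (((univ : Finset (Fin n)).powerset.filter fun S => S.Nonempty)).Nonempty
  · obtain ⟨S, hS, hsup⟩ := Finset.exists_mem_eq_sup _ hne
      (fun S => ((F ∩ S.sym2).card : ℚ≥0) / (S.card : ℚ≥0))
    rw [hsup, NNRat.cast_div, NNRat.cast_natCast, NNRat.cast_natCast]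
    simp only [Finset.mem_filter] at hS
    have hk : (0:ℝ) < S.card := by
      exact_mod_cast Finset.card_pos.2 hS.2
    rw [div_le_iff₀ hk]
    exact h S hS.2
  · rw [Finset.not_nonempty_iff_eq_empty] at hne
    rw [hne]
    simpa using hD

lemma densE_attained (hn : 0 < n) (F : Finset (Sym2 (Fin n))) :
    ∃ S : Finset (Fin n), S.Nonempty ∧
      (densE F : ℝ) = ((F ∩ S.sym2).card : ℝ) / (S.card : ℝ) := by
  have hne : (((univ : Finset (Fin n)).powerset.filter fun S => S.Nonempty)).Nonempty := by
    refine ⟨{⟨0, hn⟩}, ?_⟩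
    simp
  obtain ⟨S, hS, hsup⟩ := Finset.exists_mem_eq_sup _ hne
    (fun S => ((F ∩ S.sym2).card : ℚ≥0) / (S.card : ℚ≥0))
  simp only [Finset.mem_filter] at hS
  refine ⟨S, hS.2, ?_⟩
  rw [densE, hsup, NNRat.cast_div, NNRat.cast_natCast, NNRat.cast_natCast]

lemma densE_nonneg (F : Finset (Sym2 (Fin n))) : (0:ℝ) ≤ (densE F : ℝ) := by positivity

-- log inequalities
lemma log1p_low {ε : ℝ} (h0 : 0 < ε) : ε / (1 + ε) ≤ Real.log (1 + ε) := by
  have h1 : (0:ℝ) < 1 + ε := by linarith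
  have := Real.log_le_sub_one_of_pos (show (0:ℝ) < (1+ε)⁻¹ by positivity)
  rw [Real.log_inv] at this
  have hinv : (1+ε)⁻¹ - 1 = -(ε/(1+ε)) := by field_simp; ring
  rw [hinv] at this
  linarith

lemma log1p_half {ε : ℝ} (h0 : 0 < ε) (h1 : ε ≤ 1) : ε / 2 ≤ Real.log (1 + ε) := by
  refine le_trans ?_ (log1p_low h0)
  rw [div_le_div_iff₀ (by norm_num) (by linarith)]
  nlinarith

lemma log1m_le {ε : ℝ} (h0 : 0 < ε) (h1 : ε < 1) : Real.log (1 - ε) ≤ -ε := by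
  have := Real.log_le_sub_one_of_pos (show (0:ℝ) < 1 - ε by linarith)
  linarith

lemma log1m_ge {ε : ℝ} (h0 : 0 < ε) (h1 : ε < 1) :
    (1 - ε) * (-Real.log (1 - ε)) ≤ ε := by
  have hm : (0:ℝ) < 1 - ε := by linarith
  have := Real.log_le_sub_one_of_pos (show (0:ℝ) < (1-ε)⁻¹ by positivity)
  rw [Real.log_inv] at this
  have hinv : (1-ε)⁻¹ - 1 = ε/(1-ε) := by field_simp; ring
  rw [hinv] at this
  calc (1-ε) * (-Real.log (1-ε)) ≤ (1-ε) * (ε/(1-ε)) := by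
        exact mul_le_mul_of_nonneg_left this (by linarith)
    _ = ε := by field_simp

lemma one_add_pow_le_exp (t : ℝ) (ht : 0 ≤ t) (m : ℕ) : (1 + t) ^ m ≤ Real.exp (m * t) := by
  calc (1+t)^m ≤ (Real.exp t)^m := by
        refine pow_le_pow_left₀ (by linarith) ?_ m
        have := Real.add_one_le_exp t; linarith
    _ = Real.exp (m * t) := (Real.exp_nat_mul t m).symm

section main
variable {n : ℕ}

lemma per_S_upper (E0 : Finset (Sym2 (Fin n))) {p ε ρ : ℝ}
    (hp0 : 0 < p) (hp1 : p < 1) (hε0 : 0 < ε) (hε1 : ε < 1) (hρ : 0 ≤ ρ)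
    (hn : 1 ≤ n) (S : Finset (Fin n)) (hS : S.Nonempty)
    (hm : ((E0 ∩ S.sym2).card : ℝ) ≤ ρ * S.card) :
    probE E0 p (fun F =>
        ((1+ε)*p*ρ + 20 * Real.log n / ε) * S.card ≤ ((F ∩ S.sym2).card : ℝ))
      ≤ ((n:ℝ) ^ (-(10:ℝ))) ^ S.card := by
  set L : ℝ := Real.log n with hLdef
  have hL : 0 ≤ L := Real.log_natCast_nonneg n
  set a : ℝ := ((1+ε)*p*ρ + 20 * L / ε) * S.card with ha
  set k : ℝ := (S.card : ℝ) with hk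
  have hk1 : (1:ℝ) ≤ k := by
    have h := Finset.card_pos.mpr hS
    rw [hk]
    exact_mod_cast h
  have hx : (1:ℝ) ≤ 1 + ε := by linarith
  have h1 := tail_upper E0 S.sym2 a hp0.le hp1.le hx
  have hx' : 1 - p + p * (1 + ε) = 1 + p * ε := by ring
  rw [hx'] at h1
  -- numerator bound
  have hnum : (1 + p*ε) ^ (E0 ∩ S.sym2).card ≤ Real.exp (p * ε * (ρ * k)) := by
    refine le_trans (one_add_pow_le_exp _ (by positivity) _) ?_
    rw [Real.exp_le_exp]
    have h2 : ((E0 ∩ S.sym2).card : ℝ) * (p * ε) ≤ (ρ * k) * (p * ε) := by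
      exact mul_le_mul_of_nonneg_right hm (by positivity)
    linarith
  -- denominator bound
  have hlog : ε / (1 + ε) ≤ Real.log (1 + ε) := log1p_low hε0
  have hlog2 : ε / 2 ≤ Real.log (1 + ε) := log1p_half hε0 hε1.le
  have hlogpos : 0 ≤ Real.log (1 + ε) := le_trans (by positivity) hlog2
  have hden : Real.exp (p * ε * (ρ * k) + 10 * k * L) ≤ (1 + ε) ^ a := by
    rw [Real.rpow_def_of_pos (by linarith : (0:ℝ) < 1 + ε), Real.exp_le_exp]
    have e1 : ((1+ε)*p*ρ) * k * (ε/(1+ε)) ≤ ((1+ε)*p*ρ) * k * Real.log (1+ε) :=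
      mul_le_mul_of_nonneg_left hlog (by positivity)
    have e2 : (20 * L / ε) * k * (ε/2) ≤ (20 * L / ε) * k * Real.log (1+ε) :=
      mul_le_mul_of_nonneg_left hlog2 (by positivity)
    have e1' : ((1+ε)*p*ρ) * k * (ε/(1+ε)) = p * ε * (ρ * k) := by
      field_simp
    have e2' : (20 * L / ε) * k * (ε/2) = 10 * k * L := by
      field_simp; ring
    calc p * ε * (ρ * k) + 10 * k * L
        = ((1+ε)*p*ρ) * k * (ε/(1+ε)) + (20 * L / ε) * k * (ε/2) := by rw [e1', e2']
      _ ≤ ((1+ε)*p*ρ) * k * Real.log (1+ε) + (20 * L / ε) * k * Real.log (1+ε) := by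
          linarith
      _ = Real.log (1+ε) * a := by rw [ha]; ring
  have hfinal : (1 + p*ε) ^ (E0 ∩ S.sym2).card / (1+ε) ^ a
      ≤ Real.exp (-(10 * k * L)) := by
    rw [div_le_iff₀ (Real.rpow_pos_of_pos (by linarith) a)]
    calc (1 + p*ε) ^ (E0 ∩ S.sym2).card ≤ Real.exp (p * ε * (ρ * k)) := hnum
      _ = Real.exp (-(10*k*L)) * Real.exp (p * ε * (ρ * k) + 10 * k * L) := by
          rw [← Real.exp_add]; ring_nf
      _ ≤ Real.exp (-(10*k*L)) * (1+ε) ^ a := by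
          exact mul_le_mul_of_nonneg_left hden (Real.exp_nonneg _)
  refine le_trans h1 (le_trans hfinal ?_)
  have hnR : (0:ℝ) < n := by exact_mod_cast hn
  rw [← Real.rpow_natCast ((n:ℝ) ^ (-(10:ℝ))) S.card, ← Real.rpow_mul hnR.le]
  rw [Real.rpow_def_of_pos hnR]
  rw [Real.exp_le_exp]
  rw [← hLdef, ← hk]
  nlinarith [mul_nonneg (mul_nonneg (by norm_num : (0:ℝ) ≤ 10) (by linarith : (0:ℝ) ≤ k)) hL]

lemma per_S_lower (E0 : Finset (Sym2 (Fin n))) {p ε ρ : ℝ}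
    (hp0 : 0 < p) (hp1 : p < 1) (hε0 : 0 < ε) (hε1 : ε < 1) (hρ : 0 ≤ ρ)
    (hn : 1 ≤ n) (S : Finset (Fin n)) (hS : S.Nonempty)
    (hm : ((E0 ∩ S.sym2).card : ℝ) = ρ * S.card) :
    probE E0 p (fun F =>
        ((F ∩ S.sym2).card : ℝ) ≤ ((1-ε)*p*ρ - 20 * Real.log n / ε) * S.card)
      ≤ (n:ℝ) ^ (-(20:ℝ)) := by
  set L : ℝ := Real.log n with hLdef
  have hL : 0 ≤ L := Real.log_natCast_nonneg n
  set b : ℝ := ((1-ε)*p*ρ - 20 * L / ε) * S.card with hb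
  set k : ℝ := (S.card : ℝ) with hk
  have hk1 : (1:ℝ) ≤ k := by
    have h := Finset.card_pos.mpr hS
    rw [hk]
    exact_mod_cast h
  have hx0 : (0:ℝ) < 1 - ε := by linarith
  have h1 := tail_lower E0 S.sym2 b hp0.le hp1.le hx0 (by linarith)
  have hx' : 1 - p + p * (1 - ε) = 1 - p * ε := by ring
  rw [hx'] at h1
  set m : ℝ := ((E0 ∩ S.sym2).card : ℝ) with hmdef
  -- numerator bound : (1 - pε)^m ≤ exp(-pε m)
  have hpε0 : 0 < p * ε := by positivity
  have hpε1 : p * ε < 1 := by nlinarith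
  have hnum : (1 - p*ε) ^ (E0 ∩ S.sym2).card ≤ Real.exp (-(p * ε) * m) := by
    calc (1 - p*ε) ^ (E0 ∩ S.sym2).card ≤ (Real.exp (-(p*ε))) ^ (E0 ∩ S.sym2).card := by
          refine pow_le_pow_left₀ (by linarith) ?_ _
          have := Real.add_one_le_exp (-(p*ε)); linarith
      _ = Real.exp ((E0 ∩ S.sym2).card * (-(p*ε))) := (Real.exp_nat_mul _ _).symm
      _ = Real.exp (-(p * ε) * m) := by rw [hmdef]; ring_nf
  -- denominator bound : exp(-pεm - b log(1-ε)) ≤ ... we need (1-ε)^b ≥ exp(b log(1-ε)) equality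
  have hlogneg : Real.log (1 - ε) ≤ -ε := log1m_le hε0 hε1
  have hlogge : (1 - ε) * (-Real.log (1 - ε)) ≤ ε := log1m_ge hε0 hε1
  have hden : (1 - ε) ^ b = Real.exp (Real.log (1-ε) * b) := Real.rpow_def_of_pos hx0 b
  have hfinal : (1 - p*ε) ^ (E0 ∩ S.sym2).card / (1-ε) ^ b ≤ Real.exp (-(20 * k * L)) := by
    rw [div_le_iff₀ (Real.rpow_pos_of_pos hx0 b), hden, ← Real.exp_add]
    refine le_trans hnum ?_
    rw [Real.exp_le_exp]
    -- need : -(pε) m ≤ -(20 k L) + log(1-ε) * b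
    -- i.e. -log(1-ε) * b ≤ pε m - 20 k L ... careful signs
    -- b = (1-ε) p ρ k - 20 L k / ε ; ρ k = m
    have hbm : b = (1-ε) * p * m - 20 * L / ε * k := by
      rw [hb, hm]; ring
    set lg : ℝ := -Real.log (1 - ε) with hlg
    have hlg1 : (1-ε) * lg ≤ ε := hlogge
    have hlg2 : ε ≤ lg := by rw [hlg]; linarith
    have hlg0 : 0 ≤ lg := le_trans hε0.le hlg2
    have hm0 : 0 ≤ m := by rw [hmdef]; positivity
    have t1 : lg * ((1-ε) * p * m) ≤ p * ε * m := by
      have h0 : ((1-ε) * lg) * (p * m) ≤ ε * (p * m) :=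
        mul_le_mul_of_nonneg_right hlg1 (by positivity)
      have e1 : lg * ((1-ε) * p * m) = ((1-ε)*lg) * (p*m) := by ring
      have e2 : ε * (p * m) = p * ε * m := by ring
      rw [e1, ← e2]; exact h0
    have t2 : 20 * k * L ≤ lg * (20 * L / ε * k) := by
      have h20 : (20 * L / ε * k) * ε ≤ (20 * L / ε * k) * lg :=
        mul_le_mul_of_nonneg_left hlg2 (by positivity)
      have hee : (20 * L / ε * k) * ε = 20 * k * L := by field_simp
      have hee2 : (20 * L / ε * k) * lg = lg * (20 * L / ε * k) := by ring
      rw [← hee, ← hee2]; exact h20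
    have key : lg * ((1-ε) * p * m) - lg * (20 * L / ε * k) ≤ p * ε * m - 20 * k * L :=
      sub_le_sub t1 t2
    have hexp : Real.log (1-ε) * b = -(lg * ((1-ε) * p * m) - lg * (20 * L / ε * k)) := by
      rw [hbm, hlg]; ring
    rw [hexp]
    linarith [key]
  refine le_trans h1 (le_trans hfinal ?_)
  have hnR : (0:ℝ) < n := by exact_mod_cast hn
  rw [Real.rpow_def_of_pos hnR, Real.exp_le_exp, ← hLdef]
  nlinarith [mul_nonneg (by norm_num : (0:ℝ) ≤ 20) (mul_nonneg (by linarith : (0:ℝ) ≤ k - 1) hL)]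


lemma probE_mono (E0 : Finset (Sym2 (Fin n))) {p : ℝ} (hp0 : 0 ≤ p) (hp1 : p ≤ 1)
    {A B : Finset (Sym2 (Fin n)) → Prop} (h : ∀ F, A F → B F) :
    probE E0 p A ≤ probE E0 p B := by
  refine Finset.sum_le_sum fun F _ => ?_
  by_cases hA : A F
  · rw [if_pos hA, if_pos (h F hA)]
  · rw [if_neg hA]
    by_cases hB : B F
    · rw [if_pos hB]; exact weight_nonneg E0 hp0 hp1 F
    · rw [if_neg hB]

lemma probE_or (E0 : Finset (Sym2 (Fin n))) {p : ℝ} (hp0 : 0 ≤ p) (hp1 : p ≤ 1)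
    (A B : Finset (Sym2 (Fin n)) → Prop) :
    probE E0 p (fun F => A F ∨ B F) ≤ probE E0 p A + probE E0 p B := by
  rw [probE, probE, probE, ← Finset.sum_add_distrib]
  refine Finset.sum_le_sum fun F _ => ?_
  have hw := weight_nonneg E0 hp0 hp1 F
  by_cases hA : A F
  · simp only [if_pos hA, if_pos (Or.inl hA : A F ∨ B F)]
    by_cases hB : B F
    · rw [if_pos hB]; linarith
    · rw [if_neg hB]; linarith
  · by_cases hB : B F
    · simp only [if_pos hB, if_pos (Or.inr hB : A F ∨ B F), if_neg hA]; linarith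
    · simp only [if_neg hA, if_neg hB]
      rw [if_neg (by tauto : ¬ (A F ∨ B F))]
      linarith

lemma sum_powerset_pow (t : ℝ) :
    ∑ S ∈ (univ : Finset (Fin n)).powerset, t ^ S.card = (t + 1) ^ n := by
  have h := Finset.prod_add (fun _ : Fin n => t) (fun _ => (1:ℝ)) univ
  rw [Finset.prod_const, Finset.card_univ, Fintype.card_fin] at h
  rw [h]
  refine Finset.sum_congr rfl fun F _ => ?_
  rw [Finset.prod_const, Finset.prod_const, one_pow, mul_one]

lemma union_sum (hn : 2 ≤ n) :
    ∑ S ∈ ((univ : Finset (Fin n)).powerset.filter fun S => S.Nonempty),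
        ((n:ℝ) ^ (-(10:ℝ))) ^ S.card
      ≤ 3 * (n:ℝ) ^ (-(9:ℝ)) := by
  have hn1 : (1:ℝ) ≤ n := by exact_mod_cast le_trans (by norm_num) hn
  have hn0 : (0:ℝ) < n := by linarith
  have step1 : ∀ S ∈ ((univ : Finset (Fin n)).powerset.filter fun S => S.Nonempty),
      ((n:ℝ) ^ (-(10:ℝ))) ^ S.card ≤ (n:ℝ) ^ (-(9:ℝ)) * ((n:ℝ)⁻¹) ^ S.card := by
    intro S hS
    simp only [Finset.mem_filter] at hS
    have hk1 : 1 ≤ S.card := Finset.card_pos.mpr hS.2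
    rw [← Real.rpow_natCast ((n:ℝ) ^ (-(10:ℝ))) S.card, ← Real.rpow_mul hn0.le]
    have e0 : ((n:ℝ)⁻¹) ^ S.card = (n:ℝ) ^ (-(S.card:ℝ)) := by
      rw [Real.rpow_neg hn0.le, Real.rpow_natCast, ← inv_pow]
    have e1 : (n:ℝ) ^ (-(9:ℝ)) * ((n:ℝ)⁻¹) ^ S.card
        = (n:ℝ) ^ (-(9:ℝ) + -(S.card:ℝ)) := by
      rw [e0, ← Real.rpow_add hn0]
    rw [e1]
    refine Real.rpow_le_rpow_of_exponent_le hn1 ?_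
    have : (1:ℝ) ≤ (S.card : ℝ) := by exact_mod_cast hk1
    nlinarith
  refine le_trans (Finset.sum_le_sum step1) ?_
  rw [← Finset.mul_sum]
  rw [mul_comm (3:ℝ) _]
  refine mul_le_mul_of_nonneg_left ?_ (Real.rpow_nonneg hn0.le _)
  have sub : ∑ S ∈ ((univ : Finset (Fin n)).powerset.filter fun S => S.Nonempty),
      ((n:ℝ)⁻¹) ^ S.card ≤ ∑ S ∈ (univ : Finset (Fin n)).powerset, ((n:ℝ)⁻¹) ^ S.card := by
    refine Finset.sum_le_sum_of_subset_of_nonneg (Finset.filter_subset _ _)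
      fun S _ _ => by positivity
  refine le_trans sub ?_
  rw [sum_powerset_pow]
  have h1 : ((n:ℝ)⁻¹ + 1) ^ n ≤ Real.exp (n * (n:ℝ)⁻¹) := by
    rw [add_comm]
    exact one_add_pow_le_exp _ (by positivity) n
  rw [mul_inv_cancel₀ (ne_of_gt hn0)] at h1
  refine le_trans h1 ?_
  have := Real.exp_one_lt_d9
  linarith


lemma edgeFinset_empty_of_le_one (hn : n ≤ 1) (G : SimpleGraph (Fin n))
    [DecidableRel G.Adj] : G.edgeFinset = ∅ := by
  ext e
  simp only [SimpleGraph.mem_edgeFinset, Finset.notMem_empty, iff_false]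
  induction e using Sym2.ind with
  | _ a b =>
    intro h
    rw [SimpleGraph.mem_edgeSet] at h
    refine G.ne_of_adj h ?_
    have ha := a.isLt
    have hb := b.isLt
    exact Fin.ext (by omega)

lemma densE_empty : (densE (∅ : Finset (Sym2 (Fin n))) : ℚ≥0) = 0 := by
  rw [densE]
  refine le_antisymm ?_ zero_le
  refine Finset.sup_le fun S hS => ?_
  simp

lemma probE_empty (p : ℝ) (A : Finset (Sym2 (Fin n)) → Prop) :
    probE (∅ : Finset (Sym2 (Fin n))) p A = if A ∅ then 1 else 0 := by
  rw [probE]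
  simp

end main

end helpers

/-- Sampling each edge independently with probability `p`, with high probability the density
satisfies `ρ(G_p) ∈ [(1 − ε)·p·ρ(G) − O(log n / ε), (1 + ε)·p·ρ(G) + O(log n / ε)]`. -/
theorem density_sample_whp :
    ∃ C c : ℝ, 0 < C ∧ 0 < c ∧
      ∀ (n : ℕ) (G : SimpleGraph (Fin n)) [DecidableRel G.Adj] (p ε : ℝ),
        0 < p → p < 1 → 0 < ε → ε < 1 →
        1 - (n : ℝ) ^ (-c) ≤
          probE G.edgeFinset p (fun F =>
            (1 - ε) * p * (densE G.edgeFinset : ℝ) - C * Real.log n / ε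
                ≤ (densE F : ℝ) ∧
              (densE F : ℝ) ≤
                (1 + ε) * p * (densE G.edgeFinset : ℝ) + C * Real.log n / ε) := by
  refine ⟨20, 1, by norm_num, by norm_num, ?_⟩
  intro n G _ p ε hp0 hp1 hε0 hε1
  set L : ℝ := Real.log n with hLdef
  have hL : 0 ≤ L := Real.log_natCast_nonneg n
  by_cases hn : 2 ≤ n
  · -- main case
    set E0 := G.edgeFinset with hE0
    set ρ : ℝ := (densE E0 : ℝ) with hρdef
    have hρ0 : 0 ≤ ρ := densE_nonneg E0
    have hn1 : 1 ≤ n := le_trans (by norm_num) hn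
    have hnR0 : (0:ℝ) < n := by exact_mod_cast lt_of_lt_of_le one_pos hn1
    have hnR1 : (1:ℝ) ≤ n := by exact_mod_cast hn1
    obtain ⟨Sst, hSst, hρeq⟩ := densE_attained (by omega) E0
    have hkst : (0:ℝ) < Sst.card := by
      exact_mod_cast Finset.card_pos.mpr hSst
    have hmst : ((E0 ∩ Sst.sym2).card : ℝ) = ρ * Sst.card := by
      rw [hρdef, hρeq]
      field_simp
    set Dup : ℝ := (1+ε)*p*ρ + 20 * L / ε with hDup
    set Dlo : ℝ := (1-ε)*p*ρ - 20 * L / ε with hDlo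
    have hDup0 : 0 ≤ Dup := by
      rw [hDup]; positivity
    set A : Finset (Sym2 (Fin n)) → Prop := fun F =>
      Dlo ≤ (densE F : ℝ) ∧ (densE F : ℝ) ≤ Dup with hA
    have hgoal : probE E0 p A = probE G.edgeFinset p (fun F =>
        (1 - ε) * p * (densE G.edgeFinset : ℝ) - 20 * Real.log n / ε ≤ (densE F : ℝ) ∧
        (densE F : ℝ) ≤ (1 + ε) * p * (densE G.edgeFinset : ℝ) + 20 * Real.log n / ε) := by
      rfl
    rw [← hgoal]
    rw [probE_compl E0 p A]
    have hbound : probE E0 p (fun F => ¬ A F) ≤ (n:ℝ) ^ (-(1:ℝ)) := by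
      -- step 1 : pointwise implication into union of tail events
      have himp : ∀ F, ¬ A F →
          ((∃ S : Finset (Fin n), S.Nonempty ∧
              Dup * S.card ≤ ((F ∩ S.sym2).card : ℝ)) ∨
            ((F ∩ Sst.sym2).card : ℝ) ≤ Dlo * Sst.card) := by
        intro F hF
        rw [hA, not_and_or] at hF
        rcases hF with hF | hF
        · right
          push_neg at hF
          have hge := densE_ge F Sst hSst
          have : ((F ∩ Sst.sym2).card : ℝ) / Sst.card < Dlo := lt_of_le_of_lt hge hF
          rw [div_lt_iff₀ hkst] at this
          linarith [this]
        · left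
          push_neg at hF
          by_contra hc
          push_neg at hc
          refine absurd (densE_le F Dup hDup0 ?_) (by linarith)
          intro S hS
          have := hc S
          by_cases hSne : S.Nonempty
          · have h2 := this hSne
            linarith [h2]
          · exact absurd hS hSne
      have step1 : probE E0 p (fun F => ¬ A F) ≤
          probE E0 p (fun F => (∃ S : Finset (Fin n), S.Nonempty ∧
              Dup * S.card ≤ ((F ∩ S.sym2).card : ℝ)))
          + probE E0 p (fun F => ((F ∩ Sst.sym2).card : ℝ) ≤ Dlo * Sst.card) := by
        refine le_trans (probE_mono E0 hp0.le hp1.le himp) ?_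
        exact probE_or E0 hp0.le hp1.le _ _
      -- step 2 : union bound over S
      have step2 : probE E0 p (fun F => (∃ S : Finset (Fin n), S.Nonempty ∧
              Dup * S.card ≤ ((F ∩ S.sym2).card : ℝ)))
          ≤ ∑ S ∈ ((univ : Finset (Fin n)).powerset.filter fun S => S.Nonempty),
              probE E0 p (fun F => Dup * S.card ≤ ((F ∩ S.sym2).card : ℝ)) := by
        refine probE_le_sum E0 hp0.le hp1.le _ _ _ ?_
        intro F _ hF
        obtain ⟨S, hSne, hles⟩ := hF
        exact ⟨S, Finset.mem_filter.mpr ⟨Finset.mem_powerset.mpr (Finset.subset_univ S), hSne⟩, hles⟩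
      -- step 3 : per-S bounds
      have step3 : ∀ S ∈ ((univ : Finset (Fin n)).powerset.filter fun S => S.Nonempty),
          probE E0 p (fun F => Dup * S.card ≤ ((F ∩ S.sym2).card : ℝ))
            ≤ ((n:ℝ) ^ (-(10:ℝ))) ^ S.card := by
        intro S hS
        simp only [Finset.mem_filter] at hS
        have hSk : (0:ℝ) < S.card := by exact_mod_cast Finset.card_pos.mpr hS.2
        have hmS : ((E0 ∩ S.sym2).card : ℝ) ≤ ρ * S.card := by
          have h := densE_ge E0 S hS.2
          rw [div_le_iff₀ hSk] at h
          rw [hρdef]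
          linarith [h]
        have h := per_S_upper E0 hp0 hp1 hε0 hε1 hρ0 hn1 S hS.2 hmS
        exact h
      have step4' : probE E0 p (fun F => ((F ∩ Sst.sym2).card : ℝ) ≤ Dlo * Sst.card)
          ≤ (n:ℝ) ^ (-(20:ℝ)) :=
        per_S_lower E0 hp0 hp1 hε0 hε1 hρ0 hn1 Sst hSst hmst
      have hsum := union_sum hn
      -- numeric finish
      have h20le9 : (n:ℝ) ^ (-(20:ℝ)) ≤ (n:ℝ) ^ (-(9:ℝ)) :=
        Real.rpow_le_rpow_of_exponent_le hnR1 (by norm_num)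
      have hfin : 3 * (n:ℝ) ^ (-(9:ℝ)) + (n:ℝ) ^ (-(20:ℝ)) ≤ (n:ℝ) ^ (-(1:ℝ)) := by
        have h4 : 3 * (n:ℝ) ^ (-(9:ℝ)) + (n:ℝ) ^ (-(20:ℝ)) ≤ 4 * (n:ℝ) ^ (-(9:ℝ)) := by
          linarith
        refine le_trans h4 ?_
        have hsplit : (n:ℝ) ^ (-(9:ℝ)) = (n:ℝ) ^ (-(1:ℝ)) * (n:ℝ) ^ (-(8:ℝ)) := by
          rw [← Real.rpow_add hnR0]; norm_num
        rw [hsplit]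
        have h8 : (n:ℝ) ^ (-(8:ℝ)) ≤ 4⁻¹ := by
          rw [Real.rpow_neg hnR0.le, show ((8:ℝ)) = ((8:ℕ):ℝ) by norm_num,
            Real.rpow_natCast]
          have hn2R : (2:ℝ) ≤ n := by exact_mod_cast hn
          have hpow : (4:ℝ) ≤ (n:ℝ) ^ (8:ℕ) := by
            have h28 := pow_le_pow_left₀ (by norm_num : (0:ℝ) ≤ 2) hn2R 8
            norm_num at h28
            linarith
          rw [inv_le_inv₀ (by positivity) (by norm_num)]
          exact hpow
        calc 4 * ((n:ℝ) ^ (-(1:ℝ)) * (n:ℝ) ^ (-(8:ℝ)))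
            ≤ 4 * ((n:ℝ) ^ (-(1:ℝ)) * 4⁻¹) := by
              refine mul_le_mul_of_nonneg_left ?_ (by norm_num)
              exact mul_le_mul_of_nonneg_left h8 (Real.rpow_nonneg hnR0.le _)
          _ = (n:ℝ) ^ (-(1:ℝ)) := by ring
      calc probE E0 p (fun F => ¬ A F)
          ≤ _ + _ := step1
        _ ≤ (∑ S ∈ ((univ : Finset (Fin n)).powerset.filter fun S => S.Nonempty),
              ((n:ℝ) ^ (-(10:ℝ))) ^ S.card) + (n:ℝ) ^ (-(20:ℝ)) := by
            refine add_le_add (le_trans step2 (Finset.sum_le_sum step3)) step4'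
        _ ≤ 3 * (n:ℝ) ^ (-(9:ℝ)) + (n:ℝ) ^ (-(20:ℝ)) := by linarith [hsum]
        _ ≤ (n:ℝ) ^ (-(1:ℝ)) := hfin
    linarith [hbound]
  · -- degenerate case n ≤ 1
    have hE : G.edgeFinset = ∅ := edgeFinset_empty_of_le_one (by omega) G
    rw [hE, probE_empty]
    have hA : ((1 - ε) * p * ((densE (∅ : Finset (Sym2 (Fin n)))) : ℝ) - 20 * Real.log n / ε
        ≤ ((densE (∅ : Finset (Sym2 (Fin n)))) : ℝ)) ∧
        ((densE (∅ : Finset (Sym2 (Fin n)))) : ℝ)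
          ≤ (1 + ε) * p * ((densE (∅ : Finset (Sym2 (Fin n)))) : ℝ) + 20 * Real.log n / ε := by
      rw [densE_empty]
      push_cast
      constructor
      · have : 0 ≤ 20 * L / ε := by positivity
        rw [← hLdef]
        linarith
      · have : 0 ≤ 20 * L / ε := by positivity
        rw [← hLdef]
        linarith
    rw [if_pos hA]
    have : (0:ℝ) ≤ (n:ℝ) ^ (-(1:ℝ)) := Real.rpow_nonneg (by positivity) _
    linarith
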